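/- arXiv:2006.14287 — 2 statements merged into one kernel-verified Lean document; each statement's English description precedes it below -/
import Mathlib

section
/- For every positive integer e, we have 2·∑_{k=1}^{e} k·N(e,k) = (e+1)·C_e, where N(e,k) is the Narayana number and C_e is the Catalan number. -/
private lemma vander (e : ℕ) :
    ∑ k ∈ Finset.Icc 1 e, e.choose k * e.choose (k-1) = (2*e).choose (e+1) := by
  rw [two_mul, Nat.add_choose_eq, Finset.Nat.sum_antidiagonal_eq_sum_range_succ_mk]
  rw [show ∑ k ∈ Finset.Icc 1 e, e.choose k * e.choose (k-1)
      = ∑ k ∈ Finset.Icc 1 e, e.choose k * e.choose (e+1-k) from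
    Finset.sum_congr rfl fun k hk => by
      simp only [Finset.mem_Icc] at hk
      rw [show e+1-k = e-(k-1) by omega, Nat.choose_symm (by omega)]]
  apply Finset.sum_subset
  · intro k hk; simp only [Finset.mem_Icc] at hk; simp only [Finset.mem_range]; omega
  · intro k hk hk'
    simp only [Finset.mem_range] at hk
    simp only [Finset.mem_Icc, not_and, not_le] at hk'
    rcases Nat.eq_zero_or_pos k with h | h
    · subst h; simp [Nat.choose_eq_zero_of_lt (by omega : e < e+1-0)]
    · have : k = e + 1 := by omega
      subst this; simp [Nat.choose_eq_zero_of_lt (by omega : e < e+1)]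

private lemma reflect (e : ℕ) :
    ∑ k ∈ Finset.Icc 1 e, (e+1-k) * (e.choose k * e.choose (k-1))
      = ∑ k ∈ Finset.Icc 1 e, k * (e.choose k * e.choose (k-1)) := by
  apply Finset.sum_nbij' (fun k => e+1-k) (fun k => e+1-k)
  · intro k hk; simp only [Finset.mem_Icc] at *; omega
  · intro k hk; simp only [Finset.mem_Icc] at *; omega
  · intro k hk; simp only [Finset.mem_Icc] at hk; omega
  · intro k hk; simp only [Finset.mem_Icc] at hk; omega
  · intro k hk
    simp only [Finset.mem_Icc] at hk
    rw [show e+1-k-1 = e-k by omega, show e+1-k = e-(k-1) by omega,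
      Nat.choose_symm (by omega : k - 1 ≤ e), Nat.choose_symm (by omega : k ≤ e)]
    ring

private lemma nat_main (e : ℕ) (he : 0 < e) :
    2 * ∑ k ∈ Finset.Icc 1 e, k * (e.choose k * e.choose (k-1))
      = e * (2*e).choose e := by
  have h2 : 2 * ∑ k ∈ Finset.Icc 1 e, k * (e.choose k * e.choose (k-1))
      = ∑ k ∈ Finset.Icc 1 e, k * (e.choose k * e.choose (k-1))
        + ∑ k ∈ Finset.Icc 1 e, (e+1-k) * (e.choose k * e.choose (k-1)) := by
    rw [reflect]; ring
  rw [h2, ← Finset.sum_add_distrib]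
  have h3 : ∀ k ∈ Finset.Icc 1 e,
      k * (e.choose k * e.choose (k-1)) + (e+1-k) * (e.choose k * e.choose (k-1))
        = (e+1) * (e.choose k * e.choose (k-1)) := by
    intro k hk; simp only [Finset.mem_Icc] at hk
    rw [← Nat.add_mul]; congr 1; omega
  rw [Finset.sum_congr rfl h3, ← Finset.mul_sum, vander]
  have h := Nat.choose_succ_right_eq (2*e) e
  rw [show 2*e - e = e by omega] at h
  rw [mul_comm (e+1), h, mul_comm]

/-- `2 ∑_{k=1}^e k·N(e,k) = (e+1)·C_e`. -/
theorem two_sum_k_narayana (e : ℕ) (he : 0 < e) :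
    2 * ∑ k ∈ Finset.Icc 1 e,
        (k : ℚ) * ((1 / (e : ℚ)) * (e.choose k) * (e.choose (k - 1)))
      = ((e : ℚ) + 1) * ((1 / ((e : ℚ) + 1)) * ((2 * e).choose e)) := by
  have he' : (e : ℚ) ≠ 0 := Nat.cast_ne_zero.mpr he.ne'
  have he1 : (e : ℚ) + 1 ≠ 0 := by positivity
  have key : (2 : ℚ) * ∑ k ∈ Finset.Icc 1 e,
        (k : ℚ) * ((e.choose k : ℚ) * (e.choose (k-1) : ℚ))
      = (e : ℚ) * (((2*e).choose e : ℕ) : ℚ) := by exact_mod_cast nat_main e he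
  have lhs : 2 * ∑ k ∈ Finset.Icc 1 e,
        (k : ℚ) * ((1 / (e : ℚ)) * (e.choose k) * (e.choose (k - 1)))
      = (1 / (e : ℚ)) * (2 * ∑ k ∈ Finset.Icc 1 e,
          (k : ℚ) * ((e.choose k : ℚ) * (e.choose (k-1) : ℚ))) := by
    simp only [Finset.mul_sum]
    apply Finset.sum_congr rfl
    intro k hk; ring
  rw [lhs, key]
  field_simp
end

section
/- The number of non-crossing partitions of the set {1, 2, ..., n} equals the Catalan number C_n = (1/(n+1))·C(2n,n). -/
/-- A "block function" presentation of a partition of `{1,…,n}` (as `Fin n`):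
`p i` is the block containing `i`. -/
def IsPartitionFun (n : ℕ) (p : Fin n → Finset (Fin n)) : Prop :=
  (∀ i, i ∈ p i) ∧ ∀ i j, p i = p j ∨ p i ∩ p j = ∅

/-- The partition is non-crossing: there are no `a < x < b < y` with `a, b` in one
block and `x, y` in a different block. -/
def IsNonCrossingFun (n : ℕ) (p : Fin n → Finset (Fin n)) : Prop :=
  ¬ ∃ a x b y : Fin n, a < x ∧ x < b ∧ b < y ∧ p a = p b ∧ p x = p y ∧ p a ≠ p x

open scoped Classical

/-- relation presentation on ℕ -/
def PartRel (n : ℕ) (r : ℕ → ℕ → Prop) : Prop :=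
  (∀ i, i < n → r i i) ∧ (∀ i j, r i j → r j i) ∧ (∀ i j k, r i j → r j k → r i k) ∧
    (∀ i j, r i j → i < n ∧ j < n)

def NCRel (r : ℕ → ℕ → Prop) : Prop :=
  ¬ ∃ a x b y : ℕ, a < x ∧ x < b ∧ b < y ∧ r a b ∧ r x y ∧ ¬ r a x

abbrev NCtype (n : ℕ) := {r : ℕ → ℕ → Prop // PartRel n r ∧ NCRel r}

instance NCtype_finite (n : ℕ) : Finite (NCtype n) := by
  have : Function.Injective (fun r : NCtype n => (fun i j : Fin n => r.1 i j)) := by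
    rintro ⟨r, hr, _⟩ ⟨r', hr', _⟩ h
    ext1
    funext a b
    apply propext
    constructor
    · intro hab
      obtain ⟨ha, hb⟩ := hr.2.2.2 a b hab
      have := congrFun (congrFun h ⟨a, ha⟩) ⟨b, hb⟩
      simpa using this.mp hab
    · intro hab
      obtain ⟨ha, hb⟩ := hr'.2.2.2 a b hab
      have := congrFun (congrFun h ⟨a, ha⟩) ⟨b, hb⟩
      simpa using this.mpr hab
  exact Finite.of_injective _ this

def glue (j : ℕ) (r₁ r₂ : ℕ → ℕ → Prop) (a b : ℕ) : Prop :=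
  (1 ≤ a ∧ a < j ∧ 1 ≤ b ∧ b < j ∧ r₁ (a-1) (b-1)) ∨
  (j ≤ a ∧ j ≤ b ∧ r₂ (a-j) (b-j)) ∨
  (a = 0 ∧ b = 0) ∨
  (a = 0 ∧ j ≤ b ∧ r₂ 0 (b-j)) ∨
  (b = 0 ∧ j ≤ a ∧ r₂ (a-j) 0)

section Glue

variable {n i : ℕ} {r₁ r₂ : ℕ → ℕ → Prop}

theorem glue_partRel (hi : i ≤ n) (h₁ : PartRel i r₁) (h₂ : PartRel (n - i) r₂) :
    PartRel (n + 1) (glue (i+1) r₁ r₂) := by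
  obtain ⟨refl₁, symm₁, trans₁, bd₁⟩ := h₁
  obtain ⟨refl₂, symm₂, trans₂, bd₂⟩ := h₂
  refine ⟨?_, ?_, ?_, ?_⟩
  · intro a ha
    rcases Nat.eq_zero_or_pos a with h | h
    · exact Or.inr (Or.inr (Or.inl ⟨h, h⟩))
    rcases lt_or_ge a (i+1) with h' | h'
    · exact Or.inl ⟨h, h', h, h', refl₁ _ (by omega)⟩
    · exact Or.inr (Or.inl ⟨h', h', refl₂ _ (by omega)⟩)
  · rintro a b (⟨h1,h2,h3,h4,h5⟩ | ⟨h1,h2,h3⟩ | ⟨h1,h2⟩ | ⟨h1,h2,h3⟩ | ⟨h1,h2,h3⟩)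
    · exact Or.inl ⟨h3, h4, h1, h2, symm₁ _ _ h5⟩
    · exact Or.inr (Or.inl ⟨h2, h1, symm₂ _ _ h3⟩)
    · exact Or.inr (Or.inr (Or.inl ⟨h2, h1⟩))
    · exact Or.inr (Or.inr (Or.inr (Or.inr ⟨h1, h2, symm₂ _ _ h3⟩)))
    · exact Or.inr (Or.inr (Or.inr (Or.inl ⟨h1, h2, symm₂ _ _ h3⟩)))
  · rintro a b c hab hbc
    rcases hab with (⟨h1,h2,h3,h4,h5⟩ | ⟨h1,h2,h3⟩ | ⟨h1,h2⟩ | ⟨h1,h2,h3⟩ | ⟨h1,h2,h3⟩) <;>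
      rcases hbc with (⟨g1,g2,g3,g4,g5⟩ | ⟨g1,g2,g3⟩ | ⟨g1,g2⟩ | ⟨g1,g2,g3⟩ | ⟨g1,g2,g3⟩) <;>
        first
        | omega
        | exact Or.inl ⟨h1, h2, g3, g4, trans₁ _ _ _ h5 g5⟩
        | exact Or.inr (Or.inl ⟨h1, g2, trans₂ _ _ _ h3 g3⟩)
        | exact Or.inr (Or.inr (Or.inr (Or.inr ⟨g1, h1, trans₂ _ _ _ h3 g3⟩)))
        | exact Or.inr (Or.inr (Or.inl ⟨h1, g2⟩))
        | exact Or.inr (Or.inr (Or.inr (Or.inl ⟨h1, g2, g3⟩)))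
        | exact Or.inr (Or.inr (Or.inr (Or.inl ⟨h1, g2, trans₂ _ _ _ h3 g3⟩)))
        | exact Or.inr (Or.inr (Or.inl ⟨h1, g1⟩))
        | exact Or.inr (Or.inr (Or.inr (Or.inr ⟨g2, h2, h3⟩)))
        | exact Or.inr (Or.inl ⟨h2, g2, trans₂ _ _ _ h3 g3⟩)
  · rintro a b (⟨h1,h2,h3,h4,h5⟩ | ⟨h1,h2,h3⟩ | ⟨h1,h2⟩ | ⟨h1,h2,h3⟩ | ⟨h1,h2,h3⟩)
    · omega
    · have := bd₂ _ _ h3; omega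
    · omega
    · have := bd₂ _ _ h3; omega
    · have := bd₂ _ _ h3; omega

theorem glue_nc (hi : i ≤ n) (h₁ : PartRel i r₁) (h₂ : PartRel (n - i) r₂)
    (nc₁ : NCRel r₁) (nc₂ : NCRel r₂) : NCRel (glue (i+1) r₁ r₂) := by
  obtain ⟨refl₁, symm₁, trans₁, bd₁⟩ := h₁
  obtain ⟨refl₂, symm₂, trans₂, bd₂⟩ := h₂
  rintro ⟨a, x, b, y, hax, hxb, hby, hab, hxy, hnax⟩
  rcases hab with (⟨h1,h2,h3,h4,h5⟩ | ⟨h1,h2,h3⟩ | ⟨h1,h2⟩ | ⟨h1,h2,h3⟩ | ⟨h1,h2,h3⟩) <;>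
    rcases hxy with (⟨g1,g2,g3,g4,g5⟩ | ⟨g1,g2,g3⟩ | ⟨g1,g2⟩ | ⟨g1,g2,g3⟩ | ⟨g1,g2,g3⟩) <;>
      try omega
  · -- M-M
    exact nc₁ ⟨a-1, x-1, b-1, y-1, by omega, by omega, by omega, h5, g5,
      fun hr => hnax (Or.inl ⟨h1, h2, by omega, by omega, hr⟩)⟩
  · -- U-U
    exact nc₂ ⟨a-(i+1), x-(i+1), b-(i+1), y-(i+1), by omega, by omega, by omega, h3, g3,
      fun hr => hnax (Or.inr (Or.inl ⟨h1, by omega, hr⟩))⟩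
  · -- a=0 with b in U, x in U
    by_cases hx : r₂ 0 (x-(i+1))
    · exact hnax (Or.inr (Or.inr (Or.inr (Or.inl ⟨h1, g1, hx⟩))))
    · have hxj : i + 1 < x := by
        rcases Nat.lt_or_ge (i+1) x with h | h
        · exact h
        · have hxe : x = i + 1 := by omega
          exfalso
          apply hx
          have : x - (i+1) = 0 := by omega
          rw [this]
          exact refl₂ 0 (by have := bd₂ _ _ g3; omega)
      exact nc₂ ⟨0, x-(i+1), b-(i+1), y-(i+1), by omega, by omega, by omega, h3, g3, hx⟩

end Glue

def R1 (j : ℕ) (r : ℕ → ℕ → Prop) (x y : ℕ) : Prop := r (x+1) (y+1) ∧ x+1 < j ∧ y+1 < j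

def R2 (j : ℕ) (r : ℕ → ℕ → Prop) (x y : ℕ) : Prop := r (x+j) (y+j)

noncomputable def jval (n : ℕ) (r : ℕ → ℕ → Prop) : ℕ :=
  if h : ∃ k, 0 < k ∧ r 0 k then Nat.find h else n + 1

section Jval

variable {n : ℕ} {r : ℕ → ℕ → Prop}

theorem jval_pos : 1 ≤ jval n r := by
  unfold jval
  split
  · next h => have := Nat.find_spec h; omega
  · omega

theorem jval_le (hr : PartRel (n+1) r) : jval n r ≤ n + 1 := by
  unfold jval
  split
  · next h =>
    obtain ⟨k, hk, hrk⟩ := id h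
    have := Nat.find_min' h (show 0 < k ∧ r 0 k from ⟨hk, hrk⟩)
    have := (hr.2.2.2 _ _ hrk).2
    omega
  · omega

theorem jval_min {k : ℕ} (hk : 0 < k) (hrk : r 0 k) : jval n r ≤ k := by
  rw [jval, dif_pos ⟨k, hk, hrk⟩]
  exact Nat.find_min' _ (show 0 < k ∧ r 0 k from ⟨hk, hrk⟩)

theorem rel0_jval (h : jval n r ≤ n) : r 0 (jval n r) := by
  by_cases hh : ∃ k, 0 < k ∧ r 0 k
  · rw [jval, dif_pos hh]
    exact (Nat.find_spec hh).2
  · exfalso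
    rw [jval, dif_neg hh] at h
    omega

/-- no relation escapes from the middle zone `[1, jval)` -/
theorem no_escape (hr : PartRel (n+1) r) (nc : NCRel r) {x y : ℕ}
    (hx1 : 1 ≤ x) (hxj : x < jval n r) (hxy : r x y) : y < jval n r := by
  by_contra hy
  push_neg at hy
  have hyn : y < n + 1 := (hr.2.2.2 _ _ hxy).2
  have hjn : jval n r ≤ n := by omega
  have h0j : r 0 (jval n r) := rel0_jval hjn
  have hn0x : ¬ r 0 x := fun h => by have := jval_min (n := n) hx1 h; omega
  rcases eq_or_lt_of_le hy with he | hlt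
  · -- y = jval
    exact hn0x (hr.2.2.1 _ _ _ h0j (hr.2.1 _ _ (he ▸ hxy)))
  · exact nc ⟨0, x, jval n r, y, hx1, hxj, hlt, h0j, hxy, hn0x⟩

theorem glue_spec (hr : PartRel (n+1) r) (nc : NCRel r) :
    glue (jval n r) (R1 (jval n r) r) (R2 (jval n r) r) = r := by
  set j := jval n r with hjdef
  have hj1 : 1 ≤ j := jval_pos
  funext a b
  apply propext
  constructor
  · rintro (⟨h1,h2,h3,h4,h5⟩ | ⟨h1,h2,h3⟩ | ⟨h1,h2⟩ | ⟨h1,h2,h3⟩ | ⟨h1,h2,h3⟩)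
    · have ea : a - 1 + 1 = a := by omega
      have eb : b - 1 + 1 = b := by omega
      have := h5.1; rwa [ea, eb] at this
    · have ea : a - j + j = a := by omega
      have eb : b - j + j = b := by omega
      have : r (a - j + j) (b - j + j) := h3
      rwa [ea, eb] at this
    · subst h1; subst h2; exact hr.1 0 (by omega)
    · -- a = 0, j ≤ b : r j b and r 0 j
      subst h1
      have eb : b - j + j = b := by omega
      have hjb : r j b := by have : r (0 + j) (b - j + j) := h3; rwa [zero_add, eb] at this
      have hjn : j < n + 1 := (hr.2.2.2 _ _ hjb).1
      have h0j : r 0 j := rel0_jval (by omega)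
      exact hr.2.2.1 _ _ _ h0j hjb
    · subst h1
      have ea : a - j + j = a := by omega
      have haj : r a j := by have : r (a - j + j) (0 + j) := h3; rwa [zero_add, ea] at this
      have hjn : j < n + 1 := (hr.2.2.2 _ _ haj).2
      have h0j : r 0 j := rel0_jval (by omega)
      exact hr.2.1 _ _ (hr.2.2.1 _ _ _ h0j (hr.2.1 _ _ haj))
  · intro hab
    rcases Nat.eq_zero_or_pos a with ha0 | ha1 <;> rcases Nat.eq_zero_or_pos b with hb0 | hb1
    · exact Or.inr (Or.inr (Or.inl ⟨ha0, hb0⟩))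
    · -- a = 0, b ≥ 1
      subst ha0
      have hjb : j ≤ b := jval_min hb1 hab
      have hjn : j ≤ n := by have := (hr.2.2.2 _ _ hab).2; omega
      have h0j : r 0 j := rel0_jval hjn
      have : r (0 + j) (b - j + j) := by
        rw [zero_add, Nat.sub_add_cancel hjb]
        exact hr.2.2.1 _ _ _ (hr.2.1 _ _ h0j) hab
      exact Or.inr (Or.inr (Or.inr (Or.inl ⟨rfl, hjb, this⟩)))
    · subst hb0
      have hba := hr.2.1 _ _ hab
      have hja : j ≤ a := jval_min ha1 hba
      have hjn : j ≤ n := by have := (hr.2.2.2 _ _ hab).1; omega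
      have h0j : r 0 j := rel0_jval hjn
      have : r (a - j + j) (0 + j) := by
        rw [zero_add, Nat.sub_add_cancel hja]
        exact hr.2.2.1 _ _ _ (hr.2.1 _ _ hba) h0j
      exact Or.inr (Or.inr (Or.inr (Or.inr ⟨rfl, hja, this⟩)))
    · -- both ≥ 1
      rcases lt_or_ge a j with haj | haj
      · have hbj : b < j := no_escape hr nc ha1 haj hab
        refine Or.inl ⟨ha1, haj, hb1, hbj, ?_, by omega, by omega⟩
        rw [Nat.sub_add_cancel ha1, Nat.sub_add_cancel hb1]
        exact hab
      · have hbj : j ≤ b := by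
          by_contra hbj
          push_neg at hbj
          have := no_escape hr nc hb1 hbj (hr.2.1 _ _ hab)
          omega
        refine Or.inr (Or.inl ⟨haj, hbj, ?_⟩)
        show r (a - j + j) (b - j + j)
        rw [Nat.sub_add_cancel haj, Nat.sub_add_cancel hbj]
        exact hab

end Jval

section Restrict

variable {n j : ℕ} {r r₁ r₂ : ℕ → ℕ → Prop}

theorem R1_partRel (hr : PartRel (n+1) r) (hj : j ≤ n+1) : PartRel (j-1) (R1 j r) := by
  refine ⟨?_, ?_, ?_, ?_⟩
  · intro x hx
    exact ⟨hr.1 (x+1) (by omega), by omega, by omega⟩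
  · rintro x y ⟨h1, h2, h3⟩
    exact ⟨hr.2.1 _ _ h1, h3, h2⟩
  · rintro x y z ⟨h1, h2, h3⟩ ⟨g1, g2, g3⟩
    exact ⟨hr.2.2.1 _ _ _ h1 g1, h2, g3⟩
  · rintro x y ⟨h1, h2, h3⟩
    omega

theorem R1_nc (nc : NCRel r) : NCRel (R1 j r) := by
  rintro ⟨a, x, b, y, hax, hxb, hby, ⟨hab, ha, hb⟩, ⟨hxy, hx, hy⟩, hnax⟩
  exact nc ⟨a+1, x+1, b+1, y+1, by omega, by omega, by omega, hab, hxy,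
    fun h => hnax ⟨h, ha, hx⟩⟩

theorem R2_partRel (hr : PartRel (n+1) r) (hj1 : 1 ≤ j) : PartRel (n+1-j) (R2 j r) := by
  refine ⟨?_, ?_, ?_, ?_⟩
  · intro x hx
    exact hr.1 (x+j) (by omega)
  · rintro x y h
    exact hr.2.1 _ _ h
  · rintro x y z h g
    exact hr.2.2.1 _ _ _ h g
  · rintro x y h
    have := hr.2.2.2 _ _ h
    omega

theorem R2_nc (nc : NCRel r) : NCRel (R2 j r) := by
  rintro ⟨a, x, b, y, hax, hxb, hby, hab, hxy, hnax⟩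
  exact nc ⟨a+j, x+j, b+j, y+j, by omega, by omega, by omega, hab, hxy, hnax⟩

variable {i : ℕ}

theorem glue_zero_iff (h₂ : PartRel (n-i) r₂) {k : ℕ} (hk : 0 < k) :
    glue (i+1) r₁ r₂ 0 k ↔ (i+1 ≤ k ∧ r₂ 0 (k-(i+1))) := by
  constructor
  · rintro (⟨h1,h2,h3,h4,h5⟩ | ⟨h1,h2,h3⟩ | ⟨h1,h2⟩ | ⟨h1,h2,h3⟩ | ⟨h1,h2,h3⟩) <;>
      first | omega | exact ⟨h2, h3⟩
  · rintro ⟨h1, h2⟩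
    exact Or.inr (Or.inr (Or.inr (Or.inl ⟨rfl, h1, h2⟩)))

theorem jval_glue (hi : i ≤ n) (h₂ : PartRel (n-i) r₂ ∧ NCRel r₂) :
    jval n (glue (i+1) r₁ r₂) = i + 1 := by
  obtain ⟨h₂, -⟩ := h₂
  by_cases hh : ∃ k, 0 < k ∧ glue (i+1) r₁ r₂ 0 k
  · rw [jval, dif_pos hh]
    obtain ⟨k, hk, hgk⟩ := id hh
    have hspec := Nat.find_spec hh
    have h1 := (glue_zero_iff h₂ hspec.1).mp hspec.2
    have hr00 : r₂ 0 0 := by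
      have := (glue_zero_iff h₂ hk).mp hgk
      have := h₂.2.2.2 _ _ this.2
      exact h₂.1 0 (by omega)
    have hle : Nat.find hh ≤ i + 1 := by
      apply Nat.find_min' hh
      refine ⟨by omega, (glue_zero_iff h₂ (by omega)).mpr ⟨le_refl _, ?_⟩⟩
      simpa using hr00
    omega
  · rw [jval, dif_neg hh]
    by_contra hne
    have hi_lt : i < n := by omega
    exact hh ⟨i+1, by omega, (glue_zero_iff h₂ (by omega)).mpr
      ⟨le_refl _, by simpa using h₂.1 0 (by omega)⟩⟩

theorem R1_glue (h₁ : PartRel i r₁) : R1 (i+1) (glue (i+1) r₁ r₂) = r₁ := by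
  funext x y
  apply propext
  constructor
  · rintro ⟨(⟨h1,h2,h3,h4,h5⟩ | ⟨h1,h2,h3⟩ | ⟨h1,h2⟩ | ⟨h1,h2,h3⟩ | ⟨h1,h2,h3⟩), hx, hy⟩ <;>
      first | omega | (simpa using h5)
  · intro h
    have := h₁.2.2.2 _ _ h
    exact ⟨Or.inl ⟨by omega, by omega, by omega, by omega, by simpa using h⟩, by omega, by omega⟩

theorem R2_glue (h₂ : PartRel (n-i) r₂) : R2 (i+1) (glue (i+1) r₁ r₂) = r₂ := by
  funext x y
  apply propext
  constructor
  · rintro (⟨h1,h2,h3,h4,h5⟩ | ⟨h1,h2,h3⟩ | ⟨h1,h2⟩ | ⟨h1,h2,h3⟩ | ⟨h1,h2,h3⟩) <;>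
      first | omega | (simpa using h3)
  · intro h
    exact Or.inr (Or.inl ⟨by omega, by omega, by simpa using h⟩)

end Restrict

theorem sigma_mk_eq {n : ℕ} {i i' : Fin (n+1)} (h : (i:ℕ) = (i':ℕ))
    {a : NCtype (i:ℕ)} {b : NCtype (n-(i:ℕ))} {a' : NCtype (i':ℕ)} {b' : NCtype (n-(i':ℕ))}
    (ha : a.1 = a'.1) (hb : b.1 = b'.1) :
    (⟨i, (a, b)⟩ : Σ k : Fin (n+1), NCtype (k:ℕ) × NCtype (n-(k:ℕ))) = ⟨i', (a', b')⟩ := by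
  have : i = i' := Fin.ext h
  subst this
  rw [Subtype.ext ha, Subtype.ext hb]

noncomputable def ncEquiv (n : ℕ) :
    NCtype (n+1) ≃ (Σ i : Fin (n+1), NCtype (i:ℕ) × NCtype (n-(i:ℕ))) where
  toFun r :=
    ⟨⟨jval n r.1 - 1, by
        have h1 := jval_le r.2.1
        have h2 : 1 ≤ jval n r.1 := jval_pos
        omega⟩,
      (⟨R1 (jval n r.1) r.1, by
          exact ⟨R1_partRel r.2.1 (jval_le r.2.1), R1_nc r.2.2⟩⟩,
       ⟨R2 (jval n r.1) r.1, by
          have h1 := jval_le r.2.1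
          have h2 : 1 ≤ jval n r.1 := jval_pos
          have h := R2_partRel r.2.1 h2
          have e : n - (jval n r.1 - 1) = n + 1 - jval n r.1 := by omega
          rw [e]
          exact ⟨h, R2_nc r.2.2⟩⟩)⟩
  invFun x :=
    ⟨glue ((x.1:ℕ)+1) x.2.1.1 x.2.2.1, by
      have hi : (x.1:ℕ) ≤ n := by omega
      exact ⟨glue_partRel hi x.2.1.2.1 x.2.2.2.1,
        glue_nc hi x.2.1.2.1 x.2.2.2.1 x.2.1.2.2 x.2.2.2.2⟩⟩
  left_inv r := by
    apply Subtype.ext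
    have h2 : 1 ≤ jval n r.1 := jval_pos
    show glue (jval n r.1 - 1 + 1) _ _ = r.1
    have e : jval n r.1 - 1 + 1 = jval n r.1 := by omega
    rw [e]
    exact glue_spec r.2.1 r.2.2
  right_inv x := by
    obtain ⟨i, r₁, r₂⟩ := x
    have hi : (i:ℕ) ≤ n := by omega
    have hj : jval n (glue ((i:ℕ)+1) r₁.1 r₂.1) = (i:ℕ) + 1 := jval_glue hi r₂.2
    apply sigma_mk_eq
    · show jval n (glue ((i:ℕ)+1) r₁.1 r₂.1) - 1 = (i:ℕ)
      omega
    · show R1 (jval n (glue ((i:ℕ)+1) r₁.1 r₂.1)) (glue ((i:ℕ)+1) r₁.1 r₂.1) = r₁.1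
      rw [hj]
      exact R1_glue r₁.2.1
    · show R2 (jval n (glue ((i:ℕ)+1) r₁.1 r₂.1)) (glue ((i:ℕ)+1) r₁.1 r₂.1) = r₂.1
      rw [hj]
      exact R2_glue r₂.2.1

theorem ncCard_zero : Nat.card (NCtype 0) = 1 := by
  rw [Nat.card_eq_one_iff_unique]
  constructor
  · constructor
    rintro ⟨r, hr, -⟩ ⟨r', hr', -⟩
    apply Subtype.ext
    funext a b
    apply propext
    constructor
    · intro h; exact absurd (hr.2.2.2 _ _ h).1 (by omega)
    · intro h; exact absurd (hr'.2.2.2 _ _ h).1 (by omega)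
  · refine ⟨⟨fun _ _ => False, ⟨?_, ?_, ?_, ?_⟩, ?_⟩⟩
    · intro i hi; omega
    · intro i j h; exact h
    · intro i j k h; exact h.elim
    · intro i j h; exact h.elim
    · rintro ⟨a, x, b, y, _, _, _, h, _⟩; exact h

theorem ncCard_succ (n : ℕ) :
    Nat.card (NCtype (n+1)) = ∑ i : Fin (n+1), Nat.card (NCtype (i:ℕ)) * Nat.card (NCtype (n-(i:ℕ))) := by
  rw [Nat.card_congr (ncEquiv n)]
  letI : ∀ i : Fin (n+1), Fintype (NCtype (i:ℕ) × NCtype (n-(i:ℕ))) :=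
    fun i => Fintype.ofFinite _
  rw [Nat.card_eq_fintype_card, Fintype.card_sigma]
  congr 1
  funext i
  rw [← Nat.card_eq_fintype_card, Nat.card_prod]

theorem ncCard_eq_catalan (n : ℕ) : Nat.card (NCtype n) = catalan n := by
  induction n using Nat.strong_induction_on with
  | _ n ih =>
    match n with
    | 0 => simpa using ncCard_zero
    | (m+1) =>
      rw [ncCard_succ, catalan_succ]
      apply Finset.sum_congr rfl
      intro i _
      rw [ih _ (by omega), ih _ (by omega)]

theorem block_eq_iff_mem {n : ℕ} {p : Fin n → Finset (Fin n)} (hp : IsPartitionFun n p)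
    {i k : Fin n} : p i = p k ↔ k ∈ p i := by
  constructor
  · intro h; rw [h]; exact hp.1 k
  · intro h
    rcases hp.2 i k with he | he
    · exact he
    · exfalso
      have : k ∈ p i ∩ p k := Finset.mem_inter.mpr ⟨h, hp.1 k⟩
      rw [he] at this
      exact absurd this (Finset.notMem_empty k)

noncomputable def funEquiv (n : ℕ) :
    {p : Fin n → Finset (Fin n) // IsPartitionFun n p ∧ IsNonCrossingFun n p} ≃ NCtype n where
  toFun p :=
    ⟨fun a b => ∃ (ha : a < n) (hb : b < n), p.1 ⟨a, ha⟩ = p.1 ⟨b, hb⟩, by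
      refine ⟨⟨?_, ?_, ?_, ?_⟩, ?_⟩
      · intro i hi; exact ⟨hi, hi, rfl⟩
      · rintro a b ⟨ha, hb, h⟩; exact ⟨hb, ha, h.symm⟩
      · rintro a b c ⟨ha, hb, h⟩ ⟨hb', hc, h'⟩; exact ⟨ha, hc, h.trans h'⟩
      · rintro a b ⟨ha, hb, -⟩; exact ⟨ha, hb⟩
      · rintro ⟨a, x, b, y, hax, hxb, hby, ⟨ha, hb, hab⟩, ⟨hx, hy, hxy⟩, hnax⟩
        exact p.2.2 ⟨⟨a, ha⟩, ⟨x, hx⟩, ⟨b, hb⟩, ⟨y, hy⟩, hax, hxb, hby, hab, hxy,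
          fun h => hnax ⟨ha, hx, h⟩⟩⟩
  invFun r :=
    ⟨fun i => Finset.univ.filter (fun k => r.1 i.1 k.1), by
      obtain ⟨⟨hrefl, hsymm, htrans, hbd⟩, hnc⟩ := r.2
      constructor
      · constructor
        · intro i
          simp only [Finset.mem_filter, Finset.mem_univ, true_and]
          exact hrefl i.1 i.isLt
        · intro i j
          by_cases h : r.1 i.1 j.1
          · left
            ext k
            simp only [Finset.mem_filter, Finset.mem_univ, true_and]
            exact ⟨fun hk => htrans _ _ _ (hsymm _ _ h) hk, fun hk => htrans _ _ _ h hk⟩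
          · right
            ext k
            simp only [Finset.mem_inter, Finset.mem_filter, Finset.mem_univ, true_and,
              Finset.notMem_empty, iff_false, not_and]
            intro h1 h2
            exact h (htrans _ _ _ h1 (hsymm _ _ h2))
      · rintro ⟨a, x, b, y, hax, hxb, hby, hab, hxy, hnax⟩
        have mem_iff : ∀ u v : Fin n,
            (Finset.univ.filter (fun k : Fin n => r.1 u.1 k.1) =
             Finset.univ.filter (fun k : Fin n => r.1 v.1 k.1)) ↔ r.1 u.1 v.1 := by
          intro u v
          constructor
          · intro h
            have : v ∈ Finset.univ.filter (fun k : Fin n => r.1 u.1 k.1) := by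
              rw [h]
              simp only [Finset.mem_filter, Finset.mem_univ, true_and]
              exact hrefl v.1 v.isLt
            simpa using this
          · intro h
            ext k
            simp only [Finset.mem_filter, Finset.mem_univ, true_and]
            exact ⟨fun hk => htrans _ _ _ (hsymm _ _ h) hk, fun hk => htrans _ _ _ h hk⟩
        exact hnc ⟨a.1, x.1, b.1, y.1, hax, hxb, hby, (mem_iff a b).mp hab,
          (mem_iff x y).mp hxy, fun h => hnax ((mem_iff a x).mpr h)⟩⟩
  left_inv p := by
    apply Subtype.ext
    funext i
    ext k
    simp only [Finset.mem_filter, Finset.mem_univ, true_and]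
    constructor
    · rintro ⟨ha, hk, h⟩
      rw [block_eq_iff_mem p.2.1] at h
      simpa using h
    · intro h
      refine ⟨i.isLt, k.isLt, ?_⟩
      rw [block_eq_iff_mem p.2.1]
      simpa using h
  right_inv r := by
    apply Subtype.ext
    funext a b
    apply propext
    obtain ⟨⟨hrefl, hsymm, htrans, hbd⟩, hnc⟩ := r.2
    constructor
    · rintro ⟨ha, hb, h⟩
      dsimp only at h
      have : (⟨b, hb⟩ : Fin n) ∈ Finset.univ.filter (fun k : Fin n => r.1 a k.1) := by
        rw [h]
        simp only [Finset.mem_filter, Finset.mem_univ, true_and]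
        exact hrefl b hb
      simpa using this
    · intro h
      obtain ⟨ha, hb⟩ := hbd _ _ h
      refine ⟨ha, hb, ?_⟩
      ext k
      simp only [Finset.mem_filter, Finset.mem_univ, true_and]
      exact ⟨fun hk => htrans _ _ _ (hsymm _ _ h) hk, fun hk => htrans _ _ _ h hk⟩


/-- The number of non-crossing partitions of `{1,…,n}` is the Catalan number
`(1/(n+1))·C(2n,n)`. -/
theorem card_noncrossing_eq_catalan (n : ℕ) :
    (Nat.card {p : Fin n → Finset (Fin n) // IsPartitionFun n p ∧ IsNonCrossingFun n p} : ℚ)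
      = (1 / ((n : ℚ) + 1)) * ((2 * n).choose n) := by
  rw [Nat.card_congr (funEquiv n), ncCard_eq_catalan]
  have h := succ_mul_catalan_eq_centralBinom n
  rw [Nat.centralBinom] at h
  have hq : ((n : ℚ) + 1) * (catalan n : ℚ) = ((2 * n).choose n : ℚ) := by
    exact_mod_cast h
  have hn : ((n : ℚ) + 1) ≠ 0 := by positivity
  field_simp
  linarith [hq]
end
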